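/- arXiv:1308.1897 — 9 statements merged into one kernel-verified Lean document; each statement's English description precedes it below -/
import Mathlib

section
/- Let A be a unital Banach algebra and let a be an element of A. If x and y both satisfy a = axa, x = xax, ax and xa hermitian (resp. a = aya, y = yay, ay and ya hermitian), then x = y. That is, the Moore-Penrose inverse in a Banach algebra is unique when it exists. -/
section MPAux
open NormedSpace

lemma scalar_exp_summable (z : ℂ) : Summable fun n : ℕ => ((n.factorial : ℂ))⁻¹ * z ^ n :=
  (expSeries_summable' (𝕂 := ℂ) (𝔸 := ℂ) z).congr (fun n => by simp [smul_eq_mul])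

lemma exp_smul_idem {A : Type*} [NormedRing A] [NormedAlgebra ℂ A]
    [CompleteSpace A] (p : A) (hp : p * p = p) (z : ℂ) :
    exp (z • p) = 1 + (Complex.exp z - 1) • p := by
  have hpow : ∀ n : ℕ, p ^ (n + 1) = p := by
    intro n
    induction n with
    | zero => simp
    | succ n ih => rw [pow_succ, ih, hp]
  have h1 : exp (z • p) = ∑' n : ℕ, ((n.factorial : ℂ))⁻¹ • (z • p) ^ n := by
    rw [exp_eq_tsum (𝕂 := ℂ)]
  have hsum2 : Summable fun n : ℕ => ((n.factorial : ℂ))⁻¹ • (z • p) ^ n :=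
    expSeries_summable' (𝕂 := ℂ) (z • p)
  rw [h1, hsum2.tsum_eq_zero_add]
  have hterm : ∀ n : ℕ, ((((n+1).factorial : ℂ))⁻¹ : ℂ) • (z • p) ^ (n + 1)
      = ((((n+1).factorial : ℂ))⁻¹ * z ^ (n+1)) • p := by
    intro n
    rw [smul_pow, smul_smul, hpow]
  simp only [pow_zero, Nat.factorial_zero, Nat.cast_one, inv_one, one_smul]
  congr 1
  have hshift : Summable fun n : ℕ => (((n+1).factorial : ℂ))⁻¹ * z ^ (n+1) :=
    (summable_nat_add_iff (f := fun n : ℕ => ((n.factorial : ℂ))⁻¹ * z ^ n) 1).2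
      (scalar_exp_summable z)
  rw [tsum_congr hterm, hshift.tsum_smul_const]
  congr 1
  have hez : Complex.exp z = ∑' n : ℕ, ((n.factorial : ℂ))⁻¹ * z ^ n := by
    rw [show Complex.exp = exp from Complex.exp_eq_exp_ℂ, exp_eq_tsum (𝕂 := ℂ)]
    exact tsum_congr fun n => by simp [smul_eq_mul]
  rw [hez, (scalar_exp_summable z).tsum_eq_zero_add]
  simp

lemma norm_one_sub_two_smul {A : Type*} [NormedRing A] [NormedAlgebra ℂ A]
    [CompleteSpace A] (p : A) (hp : p * p = p)
    (hherm : ∀ t : ℝ, ‖exp (((Complex.I * t) : ℂ) • p)‖ = 1) :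
    ‖1 + (-2 : ℂ) • p‖ = 1 := by
  have h := hherm Real.pi
  rw [exp_smul_idem p hp] at h
  rw [mul_comm, Complex.exp_pi_mul_I] at h
  norm_num at h
  convert h using 3
  norm_num

lemma nilp {A : Type*} [NormedRing A] [NormedAlgebra ℂ A] [NormOneClass A]
    (r : A) (hr : r * r = 0) (h : ‖1 + (-2 : ℂ) • r‖ ≤ 1) : r = 0 := by
  have hpow : ∀ n : ℕ, (1 + (-2 : ℂ) • r) ^ n = 1 + ((-2 : ℂ) * n) • r := by
    intro n
    induction n with
    | zero => simp
    | succ n ih =>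
      rw [pow_succ, ih]
      simp only [mul_add, add_mul, mul_one, one_mul, smul_mul_assoc, mul_smul_comm, hr,
        smul_zero, Nat.cast_succ]
      module
  have hb : ∀ n : ℕ, (2 * n : ℝ) * ‖r‖ ≤ 2 := by
    intro n
    have h1 : ‖(1 + (-2 : ℂ) • r) ^ n‖ ≤ 1 := by
      calc ‖(1 + (-2 : ℂ) • r) ^ n‖ ≤ ‖1 + (-2 : ℂ) • r‖ ^ n := norm_pow_le _ _
        _ ≤ 1 := pow_le_one₀ (norm_nonneg _) h
    have h2 : ((-2 : ℂ) * n) • r = (1 + (-2 : ℂ) • r) ^ n - 1 := by rw [hpow]; abel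
    have h3 : ‖((-2 : ℂ) * n) • r‖ ≤ 2 := by
      rw [h2]
      calc ‖(1 + (-2 : ℂ) • r) ^ n - 1‖ ≤ ‖(1 + (-2 : ℂ) • r) ^ n‖ + ‖(1 : A)‖ :=
            norm_sub_le _ _
        _ ≤ 1 + 1 := by rw [norm_one]; linarith
        _ = 2 := by norm_num
    rwa [norm_smul, norm_mul, Complex.norm_natCast,
      show ‖(-2 : ℂ)‖ = 2 by norm_num] at h3
  by_contra hne
  have hpos : 0 < ‖r‖ := norm_pos_iff.2 hne
  obtain ⟨n, hn⟩ := exists_nat_gt (1 / ‖r‖)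
  have := hb n
  have : (2 * n : ℝ) * ‖r‖ > 2 := by
    have : (n : ℝ) * ‖r‖ > 1 := by
      rw [gt_iff_lt, ← div_lt_iff₀ hpos] at *
      exact hn
    nlinarith
  linarith [hb n]

lemma expand1 {A : Type*} [NormedRing A] [NormedAlgebra ℂ A] (p q : A) (h : p * q = q) :
    (1 + (-2 : ℂ) • p) * (1 + (-2 : ℂ) • q) = 1 + (-2 : ℂ) • (p - q) := by
  simp only [mul_add, add_mul, mul_one, one_mul, smul_mul_assoc, mul_smul_comm, h, smul_sub]
  module

lemma expand2 {A : Type*} [NormedRing A] [NormedAlgebra ℂ A] (p q : A) (h : p * q = p) :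
    (1 + (-2 : ℂ) • p) * (1 + (-2 : ℂ) • q) = 1 + (-2 : ℂ) • (q - p) := by
  simp only [mul_add, add_mul, mul_one, one_mul, smul_mul_assoc, mul_smul_comm, h, smul_sub]
  module

lemma key {A : Type*} [NormedRing A] [NormedAlgebra ℂ A] [CompleteSpace A] [NormOneClass A]
    (p q s : A) (hp : p * p = p) (hq : q * q = q)
    (hermp : ∀ t : ℝ, ‖exp (((Complex.I * t) : ℂ) • p)‖ = 1)
    (hermq : ∀ t : ℝ, ‖exp (((Complex.I * t) : ℂ) • q)‖ = 1)
    (hv : (1 + (-2 : ℂ) • p) * (1 + (-2 : ℂ) • q) = 1 + (-2 : ℂ) • s)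
    (hs : s * s = 0) : s = 0 := by
  apply nilp s hs
  rw [← hv]
  calc ‖(1 + (-2 : ℂ) • p) * (1 + (-2 : ℂ) • q)‖
      ≤ ‖1 + (-2 : ℂ) • p‖ * ‖1 + (-2 : ℂ) • q‖ := norm_mul_le _ _
    _ = 1 := by rw [norm_one_sub_two_smul p hp hermp, norm_one_sub_two_smul q hq hermq]; ring

end MPAux



/-- An element `h` of a complex normed algebra is hermitian if
`‖exp(i t h)‖ = 1` for all real `t`. -/
def IsHermitian {A : Type*} [NormedRing A] [NormedAlgebra ℂ A] (h : A) : Prop :=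
  ∀ t : ℝ, ‖NormedSpace.exp (((Complex.I * t) : ℂ) • h)‖ = 1

/-- `x` is a Moore-Penrose inverse of `a`: `a = axa`, `x = xax`, and
`ax`, `xa` are hermitian. -/
def IsMoorePenrose {A : Type*} [NormedRing A] [NormedAlgebra ℂ A] (a x : A) : Prop :=
  a = a * x * a ∧ x = x * a * x ∧ IsHermitian (a * x) ∧ IsHermitian (x * a)

/-- The Moore-Penrose inverse in a unital Banach algebra is unique when it exists. -/
theorem moore_penrose_unique {A : Type*} [NormedRing A] [NormedAlgebra ℂ A]
    [CompleteSpace A] [NormOneClass A] (a x y : A)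
    (hx : IsMoorePenrose a x) (hy : IsMoorePenrose a y) : x = y := by
  obtain ⟨hx1, hx2, hx3, hx4⟩ := hx
  obtain ⟨hy1, hy2, hy3, hy4⟩ := hy
  have hpp : (a * x) * (a * x) = a * x := by rw [show (a * x) * (a * x) = (a * x * a) * x by noncomm_ring, ← hx1]
  have hqq : (a * y) * (a * y) = a * y := by rw [show (a * y) * (a * y) = (a * y * a) * y by noncomm_ring, ← hy1]
  have hpq : (a * x) * (a * y) = a * y := by rw [show (a * x) * (a * y) = (a * x * a) * y by noncomm_ring, ← hx1]
  have hqp : (a * y) * (a * x) = a * x := by rw [show (a * y) * (a * x) = (a * y * a) * x by noncomm_ring, ← hy1]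
  have hs : ((a * x) - (a * y)) * ((a * x) - (a * y)) = 0 := by
    rw [sub_mul, mul_sub, mul_sub, hpp, hqq, hpq, hqp]; abel
  have h1 : a * x = a * y := by
    have := key (a * x) (a * y) (a * x - a * y) hpp hqq hx3 hy3
      (expand1 _ _ hpq) hs
    linear_combination (norm := abel) this
  have hpp' : (x * a) * (x * a) = x * a := by rw [show (x * a) * (x * a) = x * (a * x * a) by noncomm_ring, ← hx1]
  have hqq' : (y * a) * (y * a) = y * a := by rw [show (y * a) * (y * a) = y * (a * y * a) by noncomm_ring, ← hy1]
  have hpq' : (x * a) * (y * a) = x * a := by rw [show (x * a) * (y * a) = x * (a * y * a) by noncomm_ring, ← hy1]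
  have hqp' : (y * a) * (x * a) = y * a := by rw [show (y * a) * (x * a) = y * (a * x * a) by noncomm_ring, ← hx1]
  have hs' : ((y * a) - (x * a)) * ((y * a) - (x * a)) = 0 := by
    rw [sub_mul, mul_sub, mul_sub, hpp', hqq', hpq', hqp']; abel
  have h2 : x * a = y * a := by
    have := key (x * a) (y * a) (y * a - x * a) hpp' hqq' hx4 hy4
      (expand2 _ _ hpq') hs'
    linear_combination (norm := abel) (-this)
  calc x = x * a * x := hx2
    _ = (y * a) * x := by rw [h2]
    _ = y * (a * x) := by noncomm_ring
    _ = y * (a * y) := by rw [h1]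
    _ = y * a * y := by noncomm_ring
    _ = y := hy2.symm
end

section
/- Let X be a Banach space and T ∈ L(X). Then T has a Moore-Penrose inverse if and only if there exist hermitian idempotents P, Q ∈ L(X) with N(P) = N(T) and R(Q) = R(T). Moreover such P and Q, when they exist, are unique. -/
set_option maxHeartbeats 1000000



lemma eq_zero_of_sq_zero {A : Type*} [NormedRing A] [NormedAlgebra ℂ A] {h : A}
    (hh : h * h = 0) {c : ℂ} (hc : c ≠ 0) (hb : ‖1 + c • h‖ ≤ 1) : h = 0 := by
  have key : ∀ n : ℕ, (1 + c • h) ^ n = 1 + ((n : ℂ) * c) • h := by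
    intro n
    induction n with
    | zero => simp
    | succ n ih =>
      rw [pow_succ, ih]
      have h3 : (((n:ℂ)*c) • h) * (c • h) = (((n:ℂ)*c) * c) • (h * h) :=
        smul_mul_smul_comm ((n:ℂ)*c) h c h
      push_cast
      rw [add_mul, mul_add, mul_add, one_mul, mul_one, h3, hh]
      simp only [smul_zero, add_zero]
      rw [one_mul, add_assoc, ← add_smul, add_mul, one_mul, add_comm (c) ((n:ℂ)*c)]
  have bound : ∀ n : ℕ, (n : ℝ) * (‖c‖ * ‖h‖) ≤ 1 + ‖(1 : A)‖ := by
    intro n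
    rcases Nat.eq_zero_or_pos n with h0 | hn0
    · subst h0; simp; positivity
    have h1 : ‖(1 + c • h) ^ n‖ ≤ 1 := by
      calc ‖(1 + c • h) ^ n‖ ≤ ‖1 + c • h‖ ^ n := norm_pow_le' _ hn0
        _ ≤ 1 ^ n := pow_le_pow_left₀ (norm_nonneg _) hb n
        _ = 1 := one_pow n
    have h2 : ((n : ℂ) * c) • h = (1 + ((n:ℂ)*c) • h) - 1 := (add_sub_cancel_left 1 _).symm
    calc (n : ℝ) * (‖c‖ * ‖h‖) = ‖((n : ℂ) * c) • h‖ := by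
          rw [norm_smul, norm_mul]; simp [mul_assoc]
      _ = ‖(1 + ((n:ℂ)*c) • h) - 1‖ := by rw [← h2]
      _ ≤ ‖1 + ((n:ℂ)*c) • h‖ + ‖(1:A)‖ := norm_sub_le _ _
      _ = ‖(1 + c • h) ^ n‖ + ‖(1:A)‖ := by rw [key n]
      _ ≤ 1 + ‖(1:A)‖ := by linarith
  by_contra hne
  have hpos : 0 < ‖c‖ * ‖h‖ := by
    have h4 : 0 < ‖h‖ := norm_pos_iff.2 hne
    have h5 : 0 < ‖c‖ := norm_pos_iff.2 hc
    positivity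
  obtain ⟨n, hn⟩ := exists_nat_gt ((1 + ‖(1:A)‖) / (‖c‖ * ‖h‖))
  have := bound n
  rw [div_lt_iff₀ hpos] at hn
  linarith

lemma exp_idem {A : Type*} [NormedRing A] [NormedAlgebra ℂ A] [CompleteSpace A] {p : A}
    (hp : IsIdempotentElem p) (z : ℂ) :
    NormedSpace.exp (z • p) = 1 + (Complex.exp z - 1) • p := by
  have hsum : Summable fun n : ℕ => ((n.factorial : ℂ))⁻¹ • (z • p) ^ n :=
    NormedSpace.expSeries_summable' (𝕂 := ℂ) (z • p)
  have hcsum0 : Summable fun n : ℕ => ((n.factorial : ℂ))⁻¹ • z ^ n :=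
    NormedSpace.expSeries_summable' (𝕂 := ℂ) (𝔸 := ℂ) z
  have hcsum : Summable fun n : ℕ => (((n+1).factorial : ℂ))⁻¹ • z ^ (n+1) :=
    (summable_nat_add_iff 1).2 hcsum0
  have hexpz : Complex.exp z = 1 + ∑' n : ℕ, (((n+1).factorial : ℂ))⁻¹ • z ^ (n+1) := by
    rw [Complex.exp_eq_exp_ℂ, NormedSpace.exp_eq_tsum (𝕂 := ℂ)]
    beta_reduce
    rw [Summable.tsum_eq_zero_add hcsum0]
    simp
  rw [NormedSpace.exp_eq_tsum (𝕂 := ℂ)]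
  beta_reduce
  rw [Summable.tsum_eq_zero_add hsum]
  have hterm : (fun n : ℕ => (((n+1).factorial : ℂ))⁻¹ • (z • p) ^ (n+1)) =
      fun n : ℕ => ((((n+1).factorial : ℂ))⁻¹ • z ^ (n+1)) • p := by
    funext n
    rw [smul_pow, hp.pow_succ_eq, smul_smul]
    simp [smul_eq_mul, mul_assoc]
  rw [hterm, Summable.tsum_smul_const, ← sub_eq_iff_eq_add'.2 hexpz]
  · simp
  · exact hcsum

lemma herm_idem_norm {A : Type*} [NormedRing A] [NormedAlgebra ℂ A] [CompleteSpace A] {p : A}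
    (hp : IsIdempotentElem p) (hph : IsHermitian p) : ‖1 + (-2 : ℂ) • p‖ = 1 := by
  have h1 := hph Real.pi
  rw [exp_idem hp] at h1
  rw [mul_comm, Complex.exp_pi_mul_I] at h1
  norm_num at h1 ⊢
  exact h1

lemma herm_idem_eq {A : Type*} [NormedRing A] [NormedAlgebra ℂ A] [CompleteSpace A] {p q : A}
    (hp : IsIdempotentElem p) (hq : IsIdempotentElem q)
    (hph : IsHermitian p) (hqh : IsHermitian q)
    (h1 : p * q = p) (h2 : q * p = q) : p = q := by
  have hsq : (p - q) * (p - q) = 0 := by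
    rw [sub_mul, mul_sub, mul_sub, hp.eq, hq.eq, h1, h2]
    abel
  have hprod : (1 + (-2:ℂ) • p) * (1 + (-2:ℂ) • q) = 1 + (2:ℂ) • (p - q) := by
    have e : ∀ a b : A, (1 + a) * (1 + b) = 1 + (a + b + a * b) := by
      intro a b; noncomm_ring
    rw [e, smul_mul_smul_comm ((-2:ℂ)) p ((-2:ℂ)) q, h1]
    congr 1
    module
  have hb : ‖1 + (2:ℂ) • (p - q)‖ ≤ 1 := by
    rw [← hprod]
    calc ‖(1 + (-2:ℂ) • p) * (1 + (-2:ℂ) • q)‖ ≤ ‖1 + (-2:ℂ) • p‖ * ‖1 + (-2:ℂ) • q‖ :=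
          norm_mul_le _ _
      _ = 1 := by rw [herm_idem_norm hp hph, herm_idem_norm hq hqh]; ring
  have := eq_zero_of_sq_zero hsq (by norm_num : (2:ℂ) ≠ 0) hb
  exact sub_eq_zero.1 this

lemma herm_idem_eq' {A : Type*} [NormedRing A] [NormedAlgebra ℂ A] [CompleteSpace A] {p q : A}
    (hp : IsIdempotentElem p) (hq : IsIdempotentElem q)
    (hph : IsHermitian p) (hqh : IsHermitian q)
    (h1 : p * q = q) (h2 : q * p = p) : p = q := by
  have hsq : (p - q) * (p - q) = 0 := by
    rw [sub_mul, mul_sub, mul_sub, hp.eq, hq.eq, h1, h2]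
    abel
  have hprod : (1 + (-2:ℂ) • p) * (1 + (-2:ℂ) • q) = 1 + (-2:ℂ) • (p - q) := by
    have e : ∀ a b : A, (1 + a) * (1 + b) = 1 + (a + b + a * b) := by
      intro a b; noncomm_ring
    rw [e, smul_mul_smul_comm ((-2:ℂ)) p ((-2:ℂ)) q, h1]
    congr 1
    module
  have hb : ‖1 + (-2:ℂ) • (p - q)‖ ≤ 1 := by
    rw [← hprod]
    calc ‖(1 + (-2:ℂ) • p) * (1 + (-2:ℂ) • q)‖ ≤ ‖1 + (-2:ℂ) • p‖ * ‖1 + (-2:ℂ) • q‖ :=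
          norm_mul_le _ _
      _ = 1 := by rw [herm_idem_norm hp hph, herm_idem_norm hq hqh]; ring
  have := eq_zero_of_sq_zero hsq (by norm_num : (-2:ℂ) ≠ 0) hb
  exact sub_eq_zero.1 this


/-- `T` has a Moore-Penrose inverse iff there exist hermitian idempotents `P`, `Q`
with `N(P) = N(T)` and `R(Q) = R(T)`; such `P` and `Q` are unique. -/
theorem moore_penrose_exists_iff_hermitian_idempotents {X : Type*} [NormedAddCommGroup X]
    [NormedSpace ℂ X] [CompleteSpace X] (T : X →L[ℂ] X) :
    ((∃ S : X →L[ℂ] X, IsMoorePenrose T S) ↔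
      ∃ P Q : X →L[ℂ] X, IsIdempotentElem P ∧ IsHermitian P ∧ IsIdempotentElem Q ∧
        IsHermitian Q ∧ LinearMap.ker (P : X →ₗ[ℂ] X) = LinearMap.ker (T : X →ₗ[ℂ] X) ∧
        LinearMap.range (Q : X →ₗ[ℂ] X) = LinearMap.range (T : X →ₗ[ℂ] X)) ∧
    ∀ P P' Q Q' : X →L[ℂ] X,
      (IsIdempotentElem P ∧ IsHermitian P ∧ LinearMap.ker (P : X →ₗ[ℂ] X) = LinearMap.ker (T : X →ₗ[ℂ] X)) →
      (IsIdempotentElem P' ∧ IsHermitian P' ∧ LinearMap.ker (P' : X →ₗ[ℂ] X) = LinearMap.ker (T : X →ₗ[ℂ] X)) →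
      (IsIdempotentElem Q ∧ IsHermitian Q ∧ LinearMap.range (Q : X →ₗ[ℂ] X) = LinearMap.range (T : X →ₗ[ℂ] X)) →
      (IsIdempotentElem Q' ∧ IsHermitian Q' ∧ LinearMap.range (Q' : X →ₗ[ℂ] X) = LinearMap.range (T : X →ₗ[ℂ] X)) →
      P = P' ∧ Q = Q' := by
  constructor
  · constructor
    · rintro ⟨S, hTST, hSTS, hTS, hST⟩
      refine ⟨S * T, T * S, ?_, hST, ?_, hTS, ?_, ?_⟩
      · show S * T * (S * T) = S * T
        calc S * T * (S * T) = S * (T * S * T) := by noncomm_ring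
          _ = S * T := by rw [← hTST]
      · show T * S * (T * S) = T * S
        calc T * S * (T * S) = (T * S * T) * S := by noncomm_ring
          _ = T * S := by rw [← hTST]
      · -- ker (S*T) = ker T
        ext x
        simp only [LinearMap.mem_ker, ContinuousLinearMap.coe_coe, ContinuousLinearMap.mul_apply]
        constructor
        · intro h
          have : T x = (T * S * T) x := by rw [← hTST]
          simp only [ContinuousLinearMap.mul_apply] at this
          rw [this, h, map_zero]
        · intro h
          rw [h, map_zero]
      · -- range (T*S) = range T
        apply le_antisymm
        · rintro y ⟨x, rfl⟩
          exact ⟨S x, by simp [ContinuousLinearMap.mul_apply]⟩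
        · rintro y ⟨x, rfl⟩
          refine ⟨T x, ?_⟩
          have : T x = (T * S * T) x := by rw [← hTST]
          simp only [ContinuousLinearMap.mul_apply] at this ⊢
          exact this.symm
    · rintro ⟨P, Q, hPi, hPh, hQi, hQh, hkP, hrQ⟩
      have hPapp : ∀ x, P (P x) = P x := fun x => by
        have := congrFun (congrArg DFunLike.coe hPi.eq) x
        simpa [ContinuousLinearMap.mul_apply] using this
      have hQapp : ∀ x, Q (Q x) = Q x := fun x => by
        have := congrFun (congrArg DFunLike.coe hQi.eq) x
        simpa [ContinuousLinearMap.mul_apply] using this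
      have hTP : ∀ x, T (P x) = T x := fun x => by
        have hx : x - P x ∈ LinearMap.ker (P : X →ₗ[ℂ] X) := by
          simp [LinearMap.mem_ker, map_sub, hPapp x]
        rw [hkP] at hx
        have h : T (x - P x) = 0 := hx
        rw [map_sub, sub_eq_zero] at h
        exact h.symm
      have hQT : ∀ x, Q (T x) = T x := fun x => by
        have hx : T x ∈ LinearMap.range (Q : X →ₗ[ℂ] X) := by rw [hrQ]; exact ⟨x, rfl⟩
        obtain ⟨y, hy⟩ := hx
        rw [← hy, ContinuousLinearMap.coe_coe, hQapp]
      have hmemK : ∀ x : X, x ∈ LinearMap.ker (((1 - P : X →L[ℂ] X)) : X →ₗ[ℂ] X) ↔ P x = x := fun x => by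
        simp only [LinearMap.mem_ker, ContinuousLinearMap.coe_coe,
          ContinuousLinearMap.sub_apply, ContinuousLinearMap.one_apply, sub_eq_zero]
        exact eq_comm
      have hmemR : ∀ x : X, x ∈ LinearMap.ker (((1 - Q : X →L[ℂ] X)) : X →ₗ[ℂ] X) ↔ Q x = x := fun x => by
        simp only [LinearMap.mem_ker, ContinuousLinearMap.coe_coe,
          ContinuousLinearMap.sub_apply, ContinuousLinearMap.one_apply, sub_eq_zero]
        exact eq_comm
      have hTmemR : ∀ x, T x ∈ LinearMap.ker (((1 - Q : X →L[ℂ] X)) : X →ₗ[ℂ] X) := fun x => (hmemR _).2 (hQT x)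
      set f : (LinearMap.ker (((1 - P : X →L[ℂ] X)) : X →ₗ[ℂ] X)) →L[ℂ] (LinearMap.ker (((1 - Q : X →L[ℂ] X)) : X →ₗ[ℂ] X)) :=
        ContinuousLinearMap.codRestrict
          (T.comp (Submodule.subtypeL _)) _ (fun x => hTmemR x) with hf
      have hfapp : ∀ u : LinearMap.ker (((1 - P : X →L[ℂ] X)) : X →ₗ[ℂ] X), (f u : X) = T (u : X) := fun u => rfl
      have hfker : f.ker = ⊥ := by
        rw [eq_bot_iff]
        rintro u hu
        have h0 : T (u : X) = 0 := by
          rw [← hfapp u]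
          exact congrArg Subtype.val (hu : f u = 0)
        have h1 : (u : X) ∈ LinearMap.ker (T : X →ₗ[ℂ] X) := h0
        rw [← hkP] at h1
        have h2 : P (u : X) = 0 := h1
        have h3 : P (u : X) = (u : X) := (hmemK _).1 u.2
        have : (u : X) = 0 := by rw [← h3, h2]
        exact Submodule.mem_bot ℂ |>.2 (Subtype.ext this)
      have hfrange : f.range = ⊤ := by
        rw [eq_top_iff]
        rintro y -
        have hy : (y : X) ∈ LinearMap.range (T : X →ₗ[ℂ] X) := by
          rw [← hrQ]
          exact ⟨(y : X), (hmemR _).1 y.2⟩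
        obtain ⟨z, hz⟩ := hy
        refine ⟨⟨P z, (hmemK _).2 (hPapp z)⟩, ?_⟩
        apply Subtype.ext
        rw [ContinuousLinearMap.coe_coe, hfapp]
        show T (P z) = (y : X)
        rw [hTP z, ← hz, ContinuousLinearMap.coe_coe]
      set e := ContinuousLinearEquiv.ofBijective f hfker hfrange with he
      have heapp : ∀ u, e u = f u := fun u => by
        rw [he]; exact congrFun (congrArg DFunLike.coe
          (ContinuousLinearEquiv.coe_ofBijective f hfker hfrange)) u
      set Qr : X →L[ℂ] (LinearMap.ker (((1 - Q : X →L[ℂ] X)) : X →ₗ[ℂ] X)) :=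
        ContinuousLinearMap.codRestrict Q _ (fun x => (hmemR _).2 (hQapp x)) with hQr
      have hQrapp : ∀ x, (Qr x : X) = Q x := fun x => rfl
      set S : X →L[ℂ] X :=
        (Submodule.subtypeL _).comp (((e.symm : LinearMap.ker (((1 - Q : X →L[ℂ] X)) : X →ₗ[ℂ] X) →L[ℂ]
          LinearMap.ker (((1 - P : X →L[ℂ] X)) : X →ₗ[ℂ] X))).comp Qr) with hS
      have hSapp : ∀ x, S x = ((e.symm (Qr x) : LinearMap.ker (((1 - P : X →L[ℂ] X)) : X →ₗ[ℂ] X)) : X) := fun x => rfl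
      have hTSQ : T * S = Q := by
        ext x
        simp only [ContinuousLinearMap.mul_apply]
        calc T (S x) = (f (e.symm (Qr x)) : X) := (hfapp _).symm
          _ = ((e (e.symm (Qr x)) : LinearMap.ker (((1 - Q : X →L[ℂ] X)) : X →ₗ[ℂ] X)) : X) := by rw [heapp]
          _ = ((Qr x : LinearMap.ker (((1 - Q : X →L[ℂ] X)) : X →ₗ[ℂ] X)) : X) := by rw [e.apply_symm_apply]
          _ = Q x := rfl
      have hSTP : S * T = P := by
        ext x
        simp only [ContinuousLinearMap.mul_apply]
        have h1 : Qr (T x) = ⟨T x, hTmemR x⟩ := Subtype.ext (hQT x)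
        have h2 : e ⟨P x, (hmemK _).2 (hPapp x)⟩ = ⟨T x, hTmemR x⟩ := by
          apply Subtype.ext
          rw [heapp, hfapp]
          exact hTP x
        calc S (T x) = ((e.symm (Qr (T x)) : LinearMap.ker (((1 - P : X →L[ℂ] X)) : X →ₗ[ℂ] X)) : X) := rfl
          _ = ((e.symm ⟨T x, hTmemR x⟩ : LinearMap.ker (((1 - P : X →L[ℂ] X)) : X →ₗ[ℂ] X)) : X) := by rw [h1]
          _ = ((⟨P x, (hmemK _).2 (hPapp x)⟩ : LinearMap.ker (((1 - P : X →L[ℂ] X)) : X →ₗ[ℂ] X)) : X) := by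
              rw [← h2, e.symm_apply_apply]
          _ = P x := rfl
      have hQTmul : Q * T = T := by
        ext x
        simp only [ContinuousLinearMap.mul_apply]
        exact hQT x
      have hPSmul : P * S = S := by
        ext x
        simp only [ContinuousLinearMap.mul_apply]
        rw [hSapp x]
        exact (hmemK _).1 (e.symm (Qr x)).2
      refine ⟨S, ?_, ?_, ?_, ?_⟩
      · rw [hTSQ, hQTmul]
      · rw [hSTP]; rw [hPSmul]
      · rw [hTSQ]; exact hQh
      · rw [hSTP]; exact hPh
  · rintro P P' Q Q' ⟨hPi, hPh, hkP⟩ ⟨hP'i, hP'h, hkP'⟩ ⟨hQi, hQh, hrQ⟩ ⟨hQ'i, hQ'h, hrQ'⟩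
    constructor
    · -- kernel case
      have hker : LinearMap.ker (P : X →ₗ[ℂ] X) = LinearMap.ker (P' : X →ₗ[ℂ] X) := hkP.trans hkP'.symm
      have h1 : P * P' = P := by
        ext x
        have hx : x - P' x ∈ LinearMap.ker (P' : X →ₗ[ℂ] X) := by
          simp only [LinearMap.mem_ker, ContinuousLinearMap.coe_coe, map_sub]
          have := congrFun (congrArg DFunLike.coe hP'i.eq) x
          simp only [ContinuousLinearMap.mul_apply] at this
          rw [this, sub_self]
        rw [← hker] at hx
        have : P (x - P' x) = 0 := hx
        simp only [map_sub, sub_eq_zero] at this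
        simpa [ContinuousLinearMap.mul_apply] using this.symm
      have h2 : P' * P = P' := by
        ext x
        have hx : x - P x ∈ LinearMap.ker (P : X →ₗ[ℂ] X) := by
          simp only [LinearMap.mem_ker, ContinuousLinearMap.coe_coe, map_sub]
          have := congrFun (congrArg DFunLike.coe hPi.eq) x
          simp only [ContinuousLinearMap.mul_apply] at this
          rw [this, sub_self]
        rw [hker] at hx
        have : P' (x - P x) = 0 := hx
        simp only [map_sub, sub_eq_zero] at this
        simpa [ContinuousLinearMap.mul_apply] using this.symm
      exact herm_idem_eq hPi hP'i hPh hP'h h1 h2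
    · -- range case
      have hrange : LinearMap.range (Q : X →ₗ[ℂ] X) = LinearMap.range (Q' : X →ₗ[ℂ] X) := hrQ.trans hrQ'.symm
      have h1 : Q * Q' = Q' := by
        ext x
        have hx : Q' x ∈ LinearMap.range (Q : X →ₗ[ℂ] X) := by rw [hrange]; exact ⟨x, rfl⟩
        obtain ⟨y, hy⟩ := hx
        have := congrFun (congrArg DFunLike.coe hQi.eq) y
        simp only [ContinuousLinearMap.mul_apply] at this ⊢
        rw [← hy, ContinuousLinearMap.coe_coe, this]
      have h2 : Q' * Q = Q := by
        ext x
        have hx : Q x ∈ LinearMap.range (Q' : X →ₗ[ℂ] X) := by rw [← hrange]; exact ⟨x, rfl⟩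
        obtain ⟨y, hy⟩ := hx
        have := congrFun (congrArg DFunLike.coe hQ'i.eq) y
        simp only [ContinuousLinearMap.mul_apply] at this ⊢
        rw [← hy, ContinuousLinearMap.coe_coe, this]
      exact herm_idem_eq' hQi hQ'i hQh hQ'h h1 h2
end

section
/- Let A be a unital Banach algebra, J a proper closed two-sided ideal of A, and a ∈ A with Moore-Penrose inverse a†. Then in the quotient Banach algebra A/J, the class of a† is the Moore-Penrose inverse of the class of a: (ã)† = (a†)~. -/
lemma hermitian_map {A B : Type*} [NormedRing A] [NormedAlgebra ℂ A]
    [CompleteSpace A] [NormOneClass A] [NormedRing B] [NormedAlgebra ℂ B]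
    [CompleteSpace B] [NormOneClass B] (π : A →ₐ[ℂ] B)
    (hle : ∀ y : A, ‖π y‖ ≤ ‖y‖) (hcont : Continuous π)
    {h : A} (hh : IsHermitian h) : IsHermitian (π h) := by
  letI : NormedAlgebra ℚ A := NormedAlgebra.restrictScalars ℚ ℂ A
  letI : NormedAlgebra ℚ B := NormedAlgebra.restrictScalars ℚ ℂ B
  have key : ∀ t : ℝ, ‖NormedSpace.exp (((Complex.I * t) : ℂ) • π h)‖ ≤ 1 := by
    intro t
    have := NormedSpace.map_exp (π : A →ₐ[ℂ] B) hcont (((Complex.I * t) : ℂ) • h)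
    rw [map_smul] at this
    rw [← this]
    calc ‖π (NormedSpace.exp (((Complex.I * t) : ℂ) • h))‖
        ≤ ‖NormedSpace.exp (((Complex.I * t) : ℂ) • h)‖ := hle _
      _ = 1 := hh t
  intro t
  refine le_antisymm (key t) ?_
  have hmul : NormedSpace.exp (((Complex.I * t) : ℂ) • π h) *
      NormedSpace.exp (((Complex.I * (-t)) : ℂ) • π h) = 1 := by
    rw [← NormedSpace.exp_add_of_commute]
    · rw [show ((Complex.I * t) : ℂ) • π h + ((Complex.I * (-t)) : ℂ) • π h = 0 by
        rw [← add_smul]; push_cast; ring_nf; simp]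
      exact NormedSpace.exp_zero
    · exact (Commute.refl (π h)).smul_left _ |>.smul_right _
  have h1 : (1:ℝ) = ‖NormedSpace.exp (((Complex.I * t) : ℂ) • π h) *
      NormedSpace.exp (((Complex.I * (-t)) : ℂ) • π h)‖ := by rw [hmul, norm_one]
  have hk : ‖NormedSpace.exp (((Complex.I * (-t)) : ℂ) • π h)‖ ≤ 1 := by
    have := key (-t); push_cast at this; exact this
  calc (1:ℝ)
      = ‖NormedSpace.exp (((Complex.I * t) : ℂ) • π h) *
        NormedSpace.exp (((Complex.I * (-t)) : ℂ) • π h)‖ := h1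
    _ ≤ ‖NormedSpace.exp (((Complex.I * t) : ℂ) • π h)‖ *
        ‖NormedSpace.exp (((Complex.I * (-t)) : ℂ) • π h)‖ := norm_mul_le _ _
    _ ≤ ‖NormedSpace.exp (((Complex.I * t) : ℂ) • π h)‖ * 1 :=
        mul_le_mul_of_nonneg_left hk (norm_nonneg _)
    _ = _ := mul_one _

/-- Quotient by a proper closed two-sided ideal, phrased via a surjective algebra
homomorphism `π : A → A/J` onto a unital Banach algebra carrying the quotient norm:
the Moore-Penrose inverse passes to the quotient, `(ã)† = (a†)~`. -/
theorem moore_penrose_quotient {A B : Type*} [NormedRing A] [NormedAlgebra ℂ A]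
    [CompleteSpace A] [NormOneClass A] [NormedRing B] [NormedAlgebra ℂ B]
    [CompleteSpace B] [NormOneClass B] (π : A →ₐ[ℂ] B)
    (hsurj : Function.Surjective π)
    (hnorm : ∀ b : B, ‖b‖ = sInf {r : ℝ | ∃ x : A, π x = b ∧ ‖x‖ = r})
    (a x : A) (h : IsMoorePenrose a x) : IsMoorePenrose (π a) (π x) := by
  obtain ⟨h1, h2, h3, h4⟩ := h
  have hle : ∀ y : A, ‖π y‖ ≤ ‖y‖ := by
    intro y
    rw [hnorm (π y)]
    exact csInf_le ⟨0, fun r ⟨z, _, hz⟩ => hz ▸ norm_nonneg z⟩ ⟨y, rfl, rfl⟩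
  have hcont : Continuous π :=
    AddMonoidHomClass.continuous_of_bound π 1 (fun y => by simpa using hle y)
  refine ⟨?_, ?_, ?_, ?_⟩
  · rw [← map_mul, ← map_mul, ← h1]
  · rw [← map_mul, ← map_mul, ← h2]
  · rw [← map_mul]; exact hermitian_map π hle hcont h3
  · rw [← map_mul]; exact hermitian_map π hle hcont h4
end

section
/- Let X be a Banach space and T ∈ L(X) with Moore-Penrose inverse T†. Then the adjoint T* ∈ L(X*) has a Moore-Penrose inverse and (T*)† = (T†)*. -/
/-- The Banach space adjoint (transpose) of `T`, acting on the dual space. -/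
noncomputable def banachAdjoint {X : Type*} [NormedAddCommGroup X] [NormedSpace ℂ X]
    (T : X →L[ℂ] X) : StrongDual ℂ X →L[ℂ] StrongDual ℂ X :=
  (ContinuousLinearMap.compL ℂ X X ℂ).flip T

set_option synthInstance.maxHeartbeats 400000

section Aux

variable {X : Type*} [NormedAddCommGroup X] [NormedSpace ℂ X]

theorem nrTopRing (A : Type*) [NormedRing A] : IsTopologicalRing A := inferInstance

noncomputable instance : IsTopologicalRing (StrongDual ℂ X →L[ℂ] StrongDual ℂ X) :=
  nrTopRing (StrongDual ℂ X →L[ℂ] StrongDual ℂ X)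

lemma badj_apply (T : X →L[ℂ] X) (f : StrongDual ℂ X) :
    banachAdjoint T f = f.comp T := rfl

lemma badj_mul (a b : X →L[ℂ] X) :
    banachAdjoint (a * b) = banachAdjoint b * banachAdjoint a := by
  ext f x
  rfl

lemma badj_one : banachAdjoint (1 : X →L[ℂ] X) = 1 := by
  ext f x
  rfl

lemma badj_smul (c : ℂ) (a : X →L[ℂ] X) :
    banachAdjoint (c • a) = c • banachAdjoint a := by
  ext f x
  simp [badj_apply]

lemma badj_pow (a : X →L[ℂ] X) (n : ℕ) :
    banachAdjoint (a ^ n) = (banachAdjoint a) ^ n := by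
  induction n with
  | zero => simpa using badj_one
  | succ n ih =>
    rw [pow_succ, badj_mul, ih, pow_succ']

lemma badj_norm (a : X →L[ℂ] X) : ‖banachAdjoint a‖ = ‖a‖ := by
  refine le_antisymm ?_ ?_
  · refine ContinuousLinearMap.opNorm_le_bound _ (norm_nonneg a) fun f => ?_
    rw [badj_apply]
    calc ‖f.comp a‖ ≤ ‖f‖ * ‖a‖ := ContinuousLinearMap.opNorm_comp_le f a
    _ = ‖a‖ * ‖f‖ := mul_comm _ _
  · refine ContinuousLinearMap.opNorm_le_bound _ (norm_nonneg (banachAdjoint a)) fun x => ?_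
    obtain ⟨g, hg1, hg2⟩ := exists_dual_vector'' ℂ (a x)
    have : ‖a x‖ = ‖g (a x)‖ := by rw [hg2]; simp
    rw [this]
    calc ‖g (a x)‖ = ‖(banachAdjoint a g) x‖ := rfl
    _ ≤ ‖banachAdjoint a g‖ * ‖x‖ := ContinuousLinearMap.le_opNorm _ _
    _ ≤ (‖banachAdjoint a‖ * ‖g‖) * ‖x‖ := by
        gcongr; exact ContinuousLinearMap.le_opNorm _ _
    _ ≤ (‖banachAdjoint a‖ * 1) * ‖x‖ := by
        gcongr
    _ = ‖banachAdjoint a‖ * ‖x‖ := by ring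

lemma badj_exp [CompleteSpace X] (a : X →L[ℂ] X) :
    banachAdjoint (NormedSpace.exp a) = NormedSpace.exp (banachAdjoint a) := by
  rw [NormedSpace.exp_eq_tsum (𝕂 := ℂ), NormedSpace.exp_eq_tsum (𝕂 := ℂ)]
  have : banachAdjoint (∑' n : ℕ, ((n.factorial : ℂ))⁻¹ • a ^ n)
      = ∑' n : ℕ, banachAdjoint (((n.factorial : ℂ))⁻¹ • a ^ n) :=
    ((ContinuousLinearMap.compL ℂ X X ℂ).flip).map_tsum
      (NormedSpace.expSeries_summable' (𝕂 := ℂ) a)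
  rw [this]
  congr 1
  ext n : 1
  rw [badj_smul, badj_pow]

lemma badj_hermitian [CompleteSpace X] {a : X →L[ℂ] X} (h : IsHermitian a) :
    IsHermitian (banachAdjoint a) := by
  intro t
  rw [← badj_smul, ← badj_exp, badj_norm]
  exact h t

end Aux

/-- If `T` has Moore-Penrose inverse `S`, then `T*` has a Moore-Penrose inverse
and `(T*)† = (T†)*`. -/
theorem moore_penrose_adjoint {X : Type*} [NormedAddCommGroup X] [NormedSpace ℂ X]
    [CompleteSpace X] (T S : X →L[ℂ] X) (h : IsMoorePenrose T S) :
    IsMoorePenrose (banachAdjoint T) (banachAdjoint S) := by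
  obtain ⟨h1, h2, h3, h4⟩ := h
  refine ⟨?_, ?_, ?_, ?_⟩
  · conv_lhs => rw [h1]
    rw [badj_mul, badj_mul, mul_assoc]
  · conv_lhs => rw [h2]
    rw [badj_mul, badj_mul, mul_assoc]
  · rw [← badj_mul]; exact badj_hermitian h4
  · rw [← badj_mul]; exact badj_hermitian h3
end

section
/- Let A be a unital Banach algebra and a ∈ A an EP element (a† exists and aa† = a†a). Then for every k ≥ 1, a^k has a Moore-Penrose inverse, (a^k)† = (a†)^k, and a^k is EP. -/
/-- If `a` is EP, then for every `k ≥ 1`, `a^k` has Moore-Penrose inverse `(a†)^k`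
and `a^k` is EP. -/
theorem pow_EP {A : Type*} [NormedRing A] [NormedAlgebra ℂ A] [CompleteSpace A]
    [NormOneClass A] (a x : A) (hx : IsMoorePenrose a x) (hEP : a * x = x * a) :
    ∀ k : ℕ, 1 ≤ k → IsMoorePenrose (a ^ k) (x ^ k) ∧ a ^ k * x ^ k = x ^ k * a ^ k := by
  obtain ⟨h1, h2, h3, h4⟩ := hx
  have hc : Commute a x := hEP
  have idem1 : a * x * (a * x) = a * x := by
    calc a * x * (a * x) = (a * x * a) * x := by noncomm_ring
    _ = a * x := by rw [← h1]
  have idem2 : x * a * (x * a) = x * a := by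
    calc x * a * (x * a) = (x * a * x) * a := by noncomm_ring
    _ = x * a := by rw [← h2]
  have powidem : ∀ (p : A), p * p = p → ∀ k : ℕ, 1 ≤ k → p ^ k = p := by
    intro p hp k hk
    induction k with
    | zero => omega
    | succ n ih =>
      rcases Nat.lt_or_ge n 1 with h | h
      · interval_cases n; simp
      · rw [pow_succ, ih h, hp]
  have key : ∀ k : ℕ, 1 ≤ k → a ^ k * x ^ k = a * x ∧ x ^ k * a ^ k = x * a := by
    intro k hk
    constructor
    · rw [← hc.mul_pow, powidem _ idem1 k hk]
    · rw [← hc.symm.mul_pow, powidem _ idem2 k hk]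
  intro k hk
  obtain ⟨e1, e2⟩ := key k hk
  have hk1 : k - 1 + 1 = k := by omega
  refine ⟨⟨?_, ?_, ?_, ?_⟩, ?_⟩
  · calc a ^ k = a * x * a * a ^ (k - 1) := by
          rw [← h1, ← pow_succ', hk1]
    _ = a * x * a ^ k := by rw [mul_assoc (a*x), ← pow_succ', hk1]
    _ = a ^ k * x ^ k * a ^ k := by rw [e1]
  · calc x ^ k = x * a * x * x ^ (k - 1) := by
          rw [← h2, ← pow_succ', hk1]
    _ = x * a * x ^ k := by rw [mul_assoc (x*a), ← pow_succ', hk1]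
    _ = x ^ k * a ^ k * x ^ k := by rw [e2]
  · rw [e1]; exact h3
  · rw [e2]; exact h4
  · rw [e1, e2, hEP]
end

section
/- Let X be a Banach space and T ∈ L(X) with Moore-Penrose inverse T†. Then the following are equivalent: (i) T is EP (T T† = T† T); (ii) N(T) = N(T†); (iii) R(T) = R(T†); (iv) there exists an invertible operator P ∈ L(X) with T† = P T. -/
section Helpers

variable {A : Type*} [NormedRing A] [NormedAlgebra ℂ A] [CompleteSpace A]

/-- The exponential of a scalar multiple of an idempotent. -/
theorem exp_idem_aux (c : ℂ) (p : A) (hp : p * p = p) :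
    NormedSpace.exp (c • p) = 1 + (Complex.exp c - 1) • p := by
  have hpow : ∀ n : ℕ, p ^ (n + 1) = p := by
    intro n; induction n with
    | zero => simp
    | succ k ih => rw [pow_succ, ih, hp]
  have hsum : Summable fun n : ℕ => ((Nat.factorial (n+1) : ℂ))⁻¹ * c ^ (n+1) := by
    have h := (NormedSpace.expSeries_summable' (𝕂 := ℂ) c).comp_injective
      (add_left_injective 1)
    exact h.congr (fun n => by simp [Function.comp, smul_eq_mul])
  have hscal : ∑' n : ℕ, ((Nat.factorial (n+1) : ℂ))⁻¹ * c ^ (n+1) = Complex.exp c - 1 := by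
    have h0 : Complex.exp c = ∑' n : ℕ, ((Nat.factorial n : ℂ))⁻¹ • c ^ n := by
      rw [Complex.exp_eq_exp_ℂ, NormedSpace.exp_eq_tsum ℂ]
    rw [Summable.tsum_eq_zero_add (NormedSpace.expSeries_summable' (𝕂 := ℂ) c)] at h0
    simp only [Nat.factorial_zero, pow_zero, smul_eq_mul] at h0 ⊢
    rw [h0]; simp
  have h1 : NormedSpace.exp (c • p) = ∑' n : ℕ, ((Nat.factorial n : ℂ))⁻¹ • (c • p) ^ n := by
    rw [NormedSpace.exp_eq_tsum ℂ]
  rw [h1, Summable.tsum_eq_zero_add (NormedSpace.expSeries_summable' (𝕂 := ℂ) (c • p))]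
  have h2 : ∀ n : ℕ, ((Nat.factorial (n+1) : ℂ))⁻¹ • (c • p) ^ (n + 1)
      = (((Nat.factorial (n+1) : ℂ))⁻¹ * c ^ (n + 1)) • p := by
    intro n; rw [smul_pow, hpow, smul_smul]
  simp only [h2, pow_zero]
  rw [Summable.tsum_smul_const hsum, hscal]
  simp

/-- An element of square zero such that `‖1 + 2r‖ ≤ 1` is zero. -/
theorem sq_zero_norm_le_aux (r : A) (hr : r * r = 0) (hn : ‖1 + (2:ℂ) • r‖ ≤ 1) :
    r = 0 := by
  have hpow : ∀ n : ℕ, (1 + (2:ℂ) • r) ^ n = 1 + ((2*n : ℂ)) • r := by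
    intro n; induction n with
    | zero => simp
    | succ k ih =>
      rw [pow_succ, ih]
      rw [add_mul, mul_add, mul_add, one_mul, mul_one]
      rw [smul_mul_smul_comm, hr, smul_zero]
      simp only [one_mul, add_zero, ← add_smul, add_assoc]
      congr 2
      push_cast; ring
  have key : ∀ n : ℕ, (2 * n : ℝ) * ‖r‖ ≤ 1 + ‖(1:A)‖ := by
    intro n
    rcases Nat.eq_zero_or_pos n with h0 | h0
    · subst h0; simp; positivity
    have h1 : ‖1 + ((2*n : ℂ)) • r‖ ≤ 1 := by
      rw [← hpow]
      calc ‖(1 + (2:ℂ) • r) ^ n‖ ≤ ‖1 + (2:ℂ) • r‖ ^ n := norm_pow_le' _ h0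
        _ ≤ 1 ^ n := pow_le_pow_left₀ (norm_nonneg _) hn n
        _ = 1 := one_pow n
    have h2 : ‖((2*n : ℂ)) • r‖ ≤ 1 + ‖(1:A)‖ := by
      have h3 : ((2*n : ℂ)) • r = (1 + ((2*n : ℂ)) • r) - 1 := by abel
      rw [h3]
      calc ‖(1 + ((2*n : ℂ)) • r) - 1‖ ≤ ‖1 + ((2*n : ℂ)) • r‖ + ‖(1:A)‖ := norm_sub_le _ _
        _ ≤ 1 + ‖(1:A)‖ := by linarith
    rw [norm_smul] at h2
    have h4 : ‖(2 * n : ℂ)‖ = 2 * n := by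
      rw [show ((2*n : ℂ)) = ((2*n : ℝ) : ℂ) by push_cast; ring, Complex.norm_real]
      rw [Real.norm_of_nonneg (by positivity)]
    rwa [h4] at h2
  by_contra hne
  have hpos : 0 < ‖r‖ := norm_pos_iff.mpr hne
  obtain ⟨n, hn'⟩ := exists_nat_gt ((1 + ‖(1:A)‖) / (2 * ‖r‖))
  have hk := key n
  have : (1 + ‖(1:A)‖) / (2 * ‖r‖) < n := hn'
  have h5 : 1 + ‖(1:A)‖ < 2 * n * ‖r‖ := by
    rw [div_lt_iff₀ (by positivity)] at this
    nlinarith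
  linarith

theorem herm_exp_pi (p : A) (hp2 : p * p = p) (hp : IsHermitian p) :
    NormedSpace.exp (((Complex.I * (Real.pi:ℝ)) : ℂ) • p) = 1 + (-2:ℂ) • p
      ∧ NormedSpace.exp (((Complex.I * ((-Real.pi:ℝ)):ℂ)) • p) = 1 + (-2:ℂ) • p := by
  have h1 : Complex.exp (Complex.I * (Real.pi:ℝ)) = -1 := by
    rw [mul_comm]; exact Complex.exp_pi_mul_I
  have h2 : Complex.exp (Complex.I * ((-Real.pi:ℝ):ℂ)) = -1 := by
    rw [show (Complex.I * ((-Real.pi:ℝ):ℂ)) = -((Real.pi:ℂ) * Complex.I) by push_cast; ring,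
      Complex.exp_neg, Complex.exp_pi_mul_I]
    norm_num
  constructor
  · rw [exp_idem_aux _ _ hp2, h1]; norm_num
  · rw [exp_idem_aux _ _ hp2, h2]; norm_num

theorem herm_pair_norm (p q : A) (hp : IsHermitian p) (hq : IsHermitian q)
    (hp2 : p * p = p) (hq2 : q * q = q) :
    ‖(1 + (-2:ℂ) • p) * (1 + (-2:ℂ) • q)‖ ≤ 1 := by
  have e1 := (herm_exp_pi p hp2 hp).1
  have e2 := (herm_exp_pi q hq2 hq).2
  calc ‖(1 + (-2:ℂ) • p) * (1 + (-2:ℂ) • q)‖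
      ≤ ‖1 + (-2:ℂ) • p‖ * ‖1 + (-2:ℂ) • q‖ := norm_mul_le _ _
    _ = 1 * 1 := by rw [← e1, ← e2, hp Real.pi, hq (-Real.pi)]
    _ = 1 := one_mul 1

theorem herm_expand (p q : A) :
    (1 + (-2:ℂ) • p) * (1 + (-2:ℂ) • q)
      = 1 + (-2:ℂ) • q + (-2:ℂ) • p + (4:ℂ) • (p * q) := by
  rw [add_mul, mul_add, mul_add, one_mul, mul_one, smul_mul_smul_comm]
  norm_num
  abel

/-- Two hermitian idempotents with the same kernel are equal. -/
theorem herm_idem_eq_ker (p q : A) (hp : IsHermitian p) (hq : IsHermitian q)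
    (hp2 : p * p = p) (hq2 : q * q = q) (h1 : p * q = p) (h2 : q * p = q) :
    p = q := by
  have hr : (p - q) * (p - q) = 0 := by
    rw [sub_mul, mul_sub, mul_sub, hp2, hq2, h1, h2]; abel
  have hnorm : ‖1 + (2:ℂ) • (p - q)‖ ≤ 1 := by
    have := herm_pair_norm p q hp hq hp2 hq2
    rw [herm_expand, h1] at this
    have heq : 1 + (-2:ℂ) • q + (-2:ℂ) • p + (4:ℂ) • p = 1 + (2:ℂ) • (p - q) := by
      rw [smul_sub]
      module
    rwa [heq] at this
  have := sq_zero_norm_le_aux (p - q) hr hnorm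
  rwa [sub_eq_zero] at this

/-- Two hermitian idempotents with the same range are equal. -/
theorem herm_idem_eq_ran (p q : A) (hp : IsHermitian p) (hq : IsHermitian q)
    (hp2 : p * p = p) (hq2 : q * q = q) (h1 : p * q = q) (h2 : q * p = p) :
    p = q := by
  have hr : (q - p) * (q - p) = 0 := by
    rw [sub_mul, mul_sub, mul_sub, hp2, hq2, h1, h2]; abel
  have hnorm : ‖1 + (2:ℂ) • (q - p)‖ ≤ 1 := by
    have := herm_pair_norm p q hp hq hp2 hq2
    rw [herm_expand, h1] at this
    have heq : 1 + (-2:ℂ) • q + (-2:ℂ) • p + (4:ℂ) • q = 1 + (2:ℂ) • (q - p) := by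
      rw [smul_sub]
      module
    rwa [heq] at this
  have := sq_zero_norm_le_aux (q - p) hr hnorm
  rw [sub_eq_zero] at this
  exact this.symm

end Helpers

/-- Characterizations of EP operators: `T` is EP iff `N(T) = N(T†)` iff
`R(T) = R(T†)` iff `T† = P T` for some invertible `P ∈ L(X)`. -/
theorem EP_operator_characterizations {X : Type*} [NormedAddCommGroup X]
    [NormedSpace ℂ X] [CompleteSpace X] (T S : X →L[ℂ] X) (h : IsMoorePenrose T S) :
    (T * S = S * T ↔ LinearMap.ker (T : X →ₗ[ℂ] X) = LinearMap.ker (S : X →ₗ[ℂ] X)) ∧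
    (T * S = S * T ↔ LinearMap.range (T : X →ₗ[ℂ] X) = LinearMap.range (S : X →ₗ[ℂ] X)) ∧
    (T * S = S * T ↔ ∃ P : X →L[ℂ] X, IsUnit P ∧ S = P * T) := by
  obtain ⟨hT, hS, hTSh, hSTh⟩ := h
  have hT' : ∀ x, T (S (T x)) = T x := fun x =>
    (congrFun (congrArg DFunLike.coe hT.symm) x)
  have hS' : ∀ x, S (T (S x)) = S x := fun x =>
    (congrFun (congrArg DFunLike.coe hS.symm) x)
  have hp2 : (T * S) * (T * S) = T * S := by
    conv_lhs => rw [show (T*S)*(T*S) = (T*S*T)*S by noncomm_ring]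
    rw [← hT]
  have hq2 : (S * T) * (S * T) = S * T := by
    conv_lhs => rw [show (S*T)*(S*T) = (S*T*S)*T by noncomm_ring]
    rw [← hS]
  have hker : T * S = S * T ↔ LinearMap.ker (T : X →ₗ[ℂ] X) = LinearMap.ker (S : X →ₗ[ℂ] X) := by
    constructor
    · intro hc
      ext x
      simp only [LinearMap.mem_ker, ContinuousLinearMap.coe_coe]
      constructor
      · intro hx
        have heq : S x = S (S (T x)) := by
          conv_lhs => rw [← hS' x]
          rw [show T (S x) = (T * S) x from rfl, hc]
          rfl
        rw [heq, hx, map_zero, map_zero]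
      · intro hx
        have heq : T x = T (T (S x)) := by
          conv_lhs => rw [← hT' x]
          rw [show S (T x) = (S * T) x from rfl, ← hc]
          rfl
        rw [heq, hx, map_zero, map_zero]
    · intro hk
      have hpq : (T * S) * (S * T) = T * S := by
        ext x
        have h1 : T (x - S (T x)) = 0 := by simp [hT' x]
        have h2 : S (x - S (T x)) = 0 := by
          have hm : x - S (T x) ∈ LinearMap.ker (S : X →ₗ[ℂ] X) := by
            rw [← hk]; exact h1
          simpa using hm
        have h3 : S x = S (S (T x)) := by
          rw [map_sub, sub_eq_zero] at h2; exact h2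
        simp only [ContinuousLinearMap.mul_apply]
        rw [← h3]
      have hqp : (S * T) * (T * S) = S * T := by
        ext x
        have h1 : S (x - T (S x)) = 0 := by simp [hS' x]
        have h2 : T (x - T (S x)) = 0 := by
          have hm : x - T (S x) ∈ LinearMap.ker (T : X →ₗ[ℂ] X) := by
            rw [hk]; exact h1
          simpa using hm
        have h3 : T x = T (T (S x)) := by
          rw [map_sub, sub_eq_zero] at h2; exact h2
        simp only [ContinuousLinearMap.mul_apply]
        rw [← h3]
      exact herm_idem_eq_ker (T*S) (S*T) hTSh hSTh hp2 hq2 hpq hqp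
  refine ⟨hker, ?_, ?_⟩
  · constructor
    · intro hc
      ext y
      simp only [LinearMap.mem_range, ContinuousLinearMap.coe_coe]
      constructor
      · rintro ⟨x, rfl⟩
        refine ⟨T (T x), ?_⟩
        have h1 : T (S (T x)) = S (T (T x)) := by
          rw [show T (S (T x)) = (T * S) (T x) from rfl, hc]; rfl
        rw [← h1, hT' x]
      · rintro ⟨x, rfl⟩
        refine ⟨S (S x), ?_⟩
        have h1 : S (T (S x)) = T (S (S x)) := by
          rw [show S (T (S x)) = (S * T) (S x) from rfl, ← hc]; rfl
        rw [← h1, hS' x]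
    · intro hr
      have hpq : (T * S) * (S * T) = S * T := by
        ext x
        simp only [ContinuousLinearMap.mul_apply]
        have hm : S (T x) ∈ LinearMap.range (T : X →ₗ[ℂ] X) := by
          rw [hr]; exact ⟨T x, rfl⟩
        obtain ⟨y, hy⟩ := hm
        rw [← hy]; exact hT' y
      have hqp : (S * T) * (T * S) = T * S := by
        ext x
        simp only [ContinuousLinearMap.mul_apply]
        have hm : T (S x) ∈ LinearMap.range (S : X →ₗ[ℂ] X) := by
          rw [← hr]; exact ⟨S x, rfl⟩
        obtain ⟨y, hy⟩ := hm
        rw [← hy]; exact hS' y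
      exact herm_idem_eq_ran (T*S) (S*T) hTSh hSTh hp2 hq2 hpq hqp
  · constructor
    · intro hc
      have k4 : (S*T)*S = S := hS.symm
      have k2 : (S*T)*T = T := by rw [← hc]; exact hT.symm
      have k3 : T*(S*T) = T := by rw [← mul_assoc]; exact hT.symm
      have k5 : S*(S*T) = S := by rw [← hc, ← mul_assoc]; exact hS.symm
      have k1 : (S*T)*(S*T) = S*T := hq2
      have k6 : (S*S)*(T*T) = S*T := by rw [mul_assoc, ← mul_assoc S T T, k2]
      have k8 : (S*S)*(S*T) = S*S := by rw [mul_assoc, k5]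
      have k9 : (S*T)*(T*T) = T*T := by rw [← mul_assoc, k2]
      have k7 : (T*T)*(S*S) = S*T := by
        rw [mul_assoc, ← mul_assoc T S S, hc, ← mul_assoc, k3, hc]
      have k10 : (T*T)*(S*T) = T*T := by rw [mul_assoc, k3]
      have k11 : (S*T)*(S*S) = S*S := by rw [← mul_assoc, k4]
      have hPT : (S*S)*T = S := by rw [mul_assoc]; exact k5
      have expand : ∀ a b c : (X →L[ℂ] X),
          (a + 1 - c)*(b + 1 - c) = a*b + a - a*c + b + 1 - c - c*b - c + c*c := by
        intros; noncomm_ring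
      have hPQ : (S*S + 1 - S*T) * (T*T + 1 - S*T) = 1 := by
        rw [expand, k6, k8, k9, k1]; abel
      have hQP : (T*T + 1 - S*T) * (S*S + 1 - S*T) = 1 := by
        rw [expand, k7, k10, k11, k1]; abel
      refine ⟨S*S + 1 - S*T, ⟨⟨_, T*T + 1 - S*T, hPQ, hQP⟩, rfl⟩, ?_⟩
      rw [sub_mul, add_mul, one_mul, hPT, k2]
      abel
    · rintro ⟨P, hP, rfl⟩
      apply hker.mpr
      obtain ⟨u, hu⟩ := hP
      ext x
      simp only [LinearMap.mem_ker, ContinuousLinearMap.coe_coe]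
      constructor
      · intro hx
        show P (T x) = 0
        rw [hx, map_zero]
      · intro hx
        have h1 : P (T x) = 0 := hx
        have h2 : T x = (↑u⁻¹ : X →L[ℂ] X) (P (T x)) := by
          rw [← hu, show (↑u⁻¹ : X →L[ℂ] X) ((↑u : X →L[ℂ] X) (T x))
              = ((↑u⁻¹ * ↑u : X →L[ℂ] X)) (T x) from rfl, u.inv_mul]
          rfl
        rw [h2, h1, map_zero]
end

section
/- Let A be a unital Banach algebra and a ∈ A with Moore-Penrose inverse a†. Then a is EP if and only if a² a† = a = a† a². -/
/-- `a` is EP iff `a² a† = a = a† a²`. -/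
theorem EP_iff_sq_mul {A : Type*} [NormedRing A] [NormedAlgebra ℂ A] [CompleteSpace A]
    [NormOneClass A] (a x : A) (hx : IsMoorePenrose a x) :
    a * x = x * a ↔ (a ^ 2 * x = a ∧ x * a ^ 2 = a) := by
  obtain ⟨h1, -, -, -⟩ := hx
  constructor
  · intro h
    constructor
    · calc a ^ 2 * x = a * (x * a) := by rw [← h]; noncomm_ring
        _ = a := by rw [← mul_assoc, ← h1]
    · calc x * a ^ 2 = (a * x) * a := by rw [h]; noncomm_ring
        _ = a := h1.symm
  · rintro ⟨h2, h3⟩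
    have key1 : (x * a) * (a * x) = x * a := by
      calc (x * a) * (a * x) = x * (a ^ 2 * x) := by noncomm_ring
        _ = x * a := by rw [h2]
    have key2 : (x * a) * (a * x) = a * x := by
      calc (x * a) * (a * x) = (x * a ^ 2) * x := by noncomm_ring
        _ = a * x := by rw [h3]
    rw [← key1, key2]
end

section
/- Let A be a unital Banach algebra and a ∈ A with Moore-Penrose inverse a†. Then a is EP if and only if a ∈ a† A ∩ A a†, which holds if and only if a† ∈ a A ∩ A a. -/
/-- `a` is EP iff `a ∈ a†A ∩ Aa†`, iff `a† ∈ aA ∩ Aa`. -/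
theorem EP_iff_mem_ideals {A : Type*} [NormedRing A] [NormedAlgebra ℂ A] [CompleteSpace A]
    [NormOneClass A] (a x : A) (hx : IsMoorePenrose a x) :
    (a * x = x * a ↔ ((∃ u : A, a = x * u) ∧ (∃ v : A, a = v * x))) ∧
    (a * x = x * a ↔ ((∃ u : A, x = a * u) ∧ (∃ v : A, x = v * a))) := by
  obtain ⟨h1, h2, -, -⟩ := hx
  constructor
  · constructor
    · intro h
      refine ⟨⟨a * a, ?_⟩, ⟨a * a, ?_⟩⟩
      · nth_rewrite 1 [h1]
        rw [h, mul_assoc]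
      · nth_rewrite 1 [h1]
        rw [mul_assoc, ← h, ← mul_assoc]
    · rintro ⟨⟨u, hu⟩, ⟨v, hv⟩⟩
      have e1 : x * a * a = a := by
        nth_rewrite 2 [hu]
        rw [← mul_assoc, ← h2, ← hu]
      have e2 : a * a * x = a := by
        nth_rewrite 1 [hv]
        rw [mul_assoc, mul_assoc, ← mul_assoc x a x, ← h2, ← hv]
      calc a * x = x * a * a * x := by rw [e1]
        _ = x * (a * a * x) := by simp [mul_assoc]
        _ = x * a := by rw [e2]
  · constructor
    · intro h
      refine ⟨⟨x * x, ?_⟩, ⟨x * x, ?_⟩⟩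
      · nth_rewrite 1 [h2]
        rw [← h, mul_assoc]
      · nth_rewrite 1 [h2]
        rw [mul_assoc, h, ← mul_assoc]
    · rintro ⟨⟨u, hu⟩, ⟨v, hv⟩⟩
      have f1 : a * x * x = x := by
        nth_rewrite 2 [hu]
        rw [← mul_assoc, ← h1, ← hu]
      have f2 : x * x * a = x := by
        nth_rewrite 1 [hv]
        rw [mul_assoc, mul_assoc, ← mul_assoc a x a, ← h1, ← hv]
      calc a * x = a * (x * x * a) := by rw [f2]
        _ = a * x * x * a := by simp [mul_assoc]
        _ = x * a := by rw [f1]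
end

section
/- Let X be a Banach space and let S, T ∈ L(X) be EP operators such that ST has a Moore-Penrose inverse. If N(ST) = N(S) + N(T) and R(ST) = R(S) ∩ R(T), then ST is EP. -/
section Helpers

variable {A : Type*} [NormedRing A] [NormedAlgebra ℂ A] [CompleteSpace A]

lemma idem_pow_succ (g : A) (hg : g * g = g) : ∀ n : ℕ, g ^ (n + 1) = g
  | 0 => pow_one g
  | n + 1 => by rw [pow_succ, idem_pow_succ g hg n, hg]

lemma exp_smul_idem_s19 (g : A) (hg : g * g = g) (c : ℂ) :
    NormedSpace.exp (c • g) = 1 + (Complex.exp c - 1) • g := by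
  have hsum : Summable fun n : ℕ => ((Nat.factorial n : ℂ)⁻¹ : ℂ) • (c • g) ^ n :=
    NormedSpace.expSeries_summable' (𝕂 := ℂ) (c • g)
  have hsc : Summable fun n : ℕ => ((Nat.factorial n : ℂ)⁻¹ : ℂ) * c ^ n := by
    simpa [smul_eq_mul] using NormedSpace.expSeries_summable' (𝕂 := ℂ) (𝔸 := ℂ) c
  have hterm : ∀ n : ℕ, (Nat.factorial (n+1) : ℂ)⁻¹ • (c • g) ^ (n + 1)
      = (((Nat.factorial (n+1) : ℂ)⁻¹ * c ^ (n+1))) • g := by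
    intro n
    rw [smul_pow, idem_pow_succ g hg, smul_smul]
  rw [NormedSpace.exp_eq_tsum (𝕂 := ℂ)]
  dsimp only
  rw [Summable.tsum_eq_zero_add hsum]
  simp only [hterm]
  have hsc1 : Summable fun n : ℕ => (Nat.factorial (n+1) : ℂ)⁻¹ * c ^ (n+1) :=
    (summable_nat_add_iff (f := fun n : ℕ => (Nat.factorial n : ℂ)⁻¹ * c ^ n) 1).mpr hsc
  rw [Summable.tsum_smul_const hsc1]
  have hexp : (∑' n : ℕ, ((Nat.factorial (n+1) : ℂ)⁻¹ * c ^ (n+1))) = Complex.exp c - 1 := by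
    have h0 : Complex.exp c = ∑' n : ℕ, ((Nat.factorial n : ℂ)⁻¹) * c ^ n := by
      rw [Complex.exp_eq_exp_ℂ, NormedSpace.exp_eq_tsum (𝕂 := ℂ)]
      simp [smul_eq_mul]
    rw [h0, Summable.tsum_eq_zero_add hsc]
    simp
  rw [hexp]
  simp

end Helpers

section Helpers2

variable {A : Type*} [NormedRing A] [NormedAlgebra ℂ A] [CompleteSpace A]

lemma herm_idem_norm_s19 (g : A) (hherm : IsHermitian g) (hg : g * g = g) :
    ‖1 - 2 * g‖ ≤ 1 := by
  have h := hherm Real.pi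
  rw [exp_smul_idem_s19 g hg] at h
  have hc : Complex.exp (Complex.I * (Real.pi : ℝ)) = -1 := by
    rw [mul_comm]; exact Complex.exp_pi_mul_I
  rw [hc] at h
  have heq : (1 : A) + ((-1 : ℂ) - 1) • g = 1 - 2 * g := by
    have h2 : ((-1 : ℂ) - 1) = -2 := by norm_num
    rw [h2, Algebra.smul_def, map_neg, map_ofNat, neg_mul, ← sub_eq_add_neg]
  rw [heq] at h
  exact le_of_eq h

lemma nilsq_zero (u d : A) (hu : ‖u‖ ≤ 1) (huu : u * u = 1 - d) (hd : d * d = 0) :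
    d = 0 := by
  have key : ∀ k : ℕ, (u * u) ^ (k + 1) = 1 - (k + 1) • d := by
    intro k
    induction k with
    | zero => simpa using huu
    | succ k ih =>
      rw [pow_succ, ih, huu, succ_nsmul d (k+1)]
      have hmd : ((k + 1) • d) * d = 0 := by rw [smul_mul_assoc, hd, smul_zero]
      set m := (k + 1) • d with hm
      have expand : (1 - m) * (1 - d) = 1 - d - m + m * d := by noncomm_ring
      rw [expand, hmd]; abel
  have hnorm : ∀ k : ℕ, ((k : ℝ) + 1) * ‖d‖ ≤ ‖(1 : A)‖ + 1 := by
    intro k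
    have h1 : ‖(u * u) ^ (k + 1)‖ ≤ 1 := by
      calc ‖(u * u) ^ (k + 1)‖ ≤ ‖u * u‖ ^ (k + 1) := norm_pow_le' _ (Nat.succ_pos k)
      _ ≤ 1 := pow_le_one₀ (norm_nonneg _) (le_trans (norm_mul_le u u)
            (by nlinarith [norm_nonneg u]))
    have h2 : (k + 1) • d = 1 - (u * u) ^ (k + 1) := by rw [key k, sub_sub_cancel]
    have h3 : ‖(k + 1) • d‖ ≤ ‖(1 : A)‖ + 1 := by
      rw [h2]
      calc ‖(1 : A) - (u*u)^(k+1)‖ ≤ ‖(1:A)‖ + ‖(u*u)^(k+1)‖ := norm_sub_le _ _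
      _ ≤ ‖(1:A)‖ + 1 := by linarith
    calc ((k : ℝ) + 1) * ‖d‖ = ‖(k + 1) • d‖ := by
          rw [← Nat.cast_smul_eq_nsmul ℝ, norm_smul, Real.norm_natCast]
          push_cast; ring
    _ ≤ ‖(1 : A)‖ + 1 := h3
  have hd0 : ‖d‖ ≤ 0 := by
    by_contra hcon
    push_neg at hcon
    obtain ⟨k, hk⟩ := exists_nat_gt ((‖(1 : A)‖ + 1) / ‖d‖)
    have := hnorm k
    rw [div_lt_iff₀ hcon] at hk
    nlinarith [norm_nonneg d]
  exact norm_eq_zero.mp (le_antisymm hd0 (norm_nonneg d))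

omit [CompleteSpace A] in
lemma four_cancel (x : A) (h : 4 * x = 0) : x = 0 := by
  have h4 : ((4 : ℂ)) • x = 0 := by
    rw [Algebra.smul_def, map_ofNat]; exact h
  rcases smul_eq_zero.mp h4 with h' | h'
  · norm_num at h'
  · exact h'

lemma lemC1 (g h : A) (hg : g * g = g) (hh : h * h = h)
    (ng : ‖1 - 2 * g‖ ≤ 1) (nh : ‖1 - 2 * h‖ ≤ 1) (hgh : g * h = h) :
    h * g = h := by
  set u := (1 - 2 * g) * (1 - 2 * h) with hu
  have hun : ‖u‖ ≤ 1 := le_trans (norm_mul_le _ _)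
    (by nlinarith [norm_nonneg (1 - 2*g), norm_nonneg (1 - 2*h)])
  have e1 : h * g * h = h := by rw [mul_assoc, hgh, hh]
  have hdd : (4 * (h * g) - 4 * h) * (4 * (h * g) - 4 * h) = 0 := by
    have expand : (4 * (h * g) - 4 * h) * (4 * (h * g) - 4 * h)
        = 16 * ((h * g * h) * g) - 16 * (h * g * h) - 16 * ((h * h) * g) + 16 * (h * h) := by
      noncomm_ring
    rw [expand, e1, hh]
    noncomm_ring
  have hv : u = 1 - 2*g + 2*h := by
    rw [hu]
    have e : (1 - 2*g) * (1 - 2*h) = 1 - 2*h - 2*g + 4*(g*h) := by noncomm_ring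
    rw [e, hgh]; noncomm_ring
  have huu : u * u = 1 - (4 * (h * g) - 4 * h) := by
    have expand : (1 - 2*g + 2*h) * (1 - 2*g + 2*h)
        = 1 - 4*g + 4*h + 4*(g*g) - 4*(g*h) - 4*(h*g) + 4*(h*h) := by noncomm_ring
    rw [hv, expand, hg, hh, hgh]
    noncomm_ring
  have hz := nilsq_zero u _ hun huu hdd
  have h4 : 4 * (h * g - h) = 0 := by rw [mul_sub]; exact hz
  exact sub_eq_zero.mp (four_cancel _ h4)

lemma lemC2 (g h : A) (hg : g * g = g) (hh : h * h = h)
    (ng : ‖1 - 2 * g‖ ≤ 1) (nh : ‖1 - 2 * h‖ ≤ 1) (hgh : g * h = g) :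
    h * g = g := by
  set u := (1 - 2 * g) * (1 - 2 * h) with hu
  have hun : ‖u‖ ≤ 1 := le_trans (norm_mul_le _ _)
    (by nlinarith [norm_nonneg (1 - 2*g), norm_nonneg (1 - 2*h)])
  have hdd : (4 * (h * g) - 4 * g) * (4 * (h * g) - 4 * g) = 0 := by
    have expand : (4 * (h * g) - 4 * g) * (4 * (h * g) - 4 * g)
        = 16 * (h * ((g * h) * g)) - 16 * (h * (g * g)) - 16 * ((g * h) * g) + 16 * (g * g) := by
      noncomm_ring
    rw [expand, hgh, hg]
    noncomm_ring
  have hv : u = 1 + 2*g - 2*h := by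
    rw [hu]
    have e : (1 - 2*g) * (1 - 2*h) = 1 - 2*h - 2*g + 4*(g*h) := by noncomm_ring
    rw [e, hgh]; noncomm_ring
  have huu : u * u = 1 - (4 * (h * g) - 4 * g) := by
    have expand : (1 + 2*g - 2*h) * (1 + 2*g - 2*h)
        = 1 + 4*g - 4*h + 4*(g*g) - 4*(g*h) - 4*(h*g) + 4*(h*h) := by noncomm_ring
    rw [hv, expand, hg, hh, hgh]
    noncomm_ring
  have hz := nilsq_zero u _ hun huu hdd
  have h4 : 4 * (h * g - g) = 0 := by rw [mul_sub]; exact hz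
  exact sub_eq_zero.mp (four_cancel _ h4)

end Helpers2

/-- If `S`, `T` are EP, `ST` has a Moore-Penrose inverse,
`N(ST) = N(S) + N(T)` and `R(ST) = R(S) ∩ R(T)`, then `ST` is EP. -/
theorem product_EP {X : Type*} [NormedAddCommGroup X] [NormedSpace ℂ X] [CompleteSpace X]
    (S T S' T' R : X →L[ℂ] X)
    (hS : IsMoorePenrose S S') (hSEP : S * S' = S' * S)
    (hT : IsMoorePenrose T T') (hTEP : T * T' = T' * T)
    (hST : IsMoorePenrose (S * T) R)
    (hker : LinearMap.ker ((S * T : X →L[ℂ] X) : X →ₗ[ℂ] X) = LinearMap.ker (S : X →ₗ[ℂ] X) ⊔ LinearMap.ker (T : X →ₗ[ℂ] X))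
    (hran : LinearMap.range ((S * T : X →L[ℂ] X) : X →ₗ[ℂ] X) = LinearMap.range (S : X →ₗ[ℂ] X) ⊓ LinearMap.range (T : X →ₗ[ℂ] X)) :
    (S * T) * R = R * (S * T) := by
  obtain ⟨hS1, hS2, hS3, hS4⟩ := hS
  obtain ⟨hT1, hT2, hT3, hT4⟩ := hT
  obtain ⟨h1, h2, h3, h4⟩ := hST
  -- idempotency
  have hpp : ((S*T)*R) * ((S*T)*R) = (S*T)*R := by
    calc ((S*T)*R) * ((S*T)*R) = ((S*T)*R*(S*T))*R := by noncomm_ring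
    _ = (S*T)*R := by rw [← h1]
  have hqq : (R*(S*T)) * (R*(S*T)) = R*(S*T) := by
    calc (R*(S*T)) * (R*(S*T)) = (R*(S*T)*R)*(S*T) := by noncomm_ring
    _ = R*(S*T) := by rw [← h2]
  have hee : (S*S') * (S*S') = S*S' := by
    calc (S*S') * (S*S') = (S*S'*S)*S' := by noncomm_ring
    _ = S*S' := by rw [← hS1]
  have hff : (T*T') * (T*T') = T*T' := by
    calc (T*T') * (T*T') = (T*T'*T)*T' := by noncomm_ring
    _ = T*T' := by rw [← hT1]
  -- norm bounds from hermitian-ness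
  have nE : ‖1 - 2*(S*S')‖ ≤ 1 := herm_idem_norm_s19 _ hS3 hee
  have nF : ‖1 - 2*(T*T')‖ ≤ 1 := herm_idem_norm_s19 _ hT3 hff
  have nP : ‖1 - 2*((S*T)*R)‖ ≤ 1 := herm_idem_norm_s19 _ h3 hpp
  have nQ : ‖1 - 2*(R*(S*T))‖ ≤ 1 := herm_idem_norm_s19 _ h4 hqq
  -- e * p = p (algebraic)
  have ep : (S*S') * ((S*T)*R) = (S*T)*R := by
    calc (S*S') * ((S*T)*R) = ((S*S'*S)*T)*R := by noncomm_ring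
    _ = (S*T)*R := by rw [← hS1]
  -- f * p = p (uses hran)
  have fp : (T*T') * ((S*T)*R) = (S*T)*R := by
    ext x
    have hmem : ((S*T)*R) x ∈ LinearMap.range ((S*T : X →L[ℂ] X) : X →ₗ[ℂ] X) :=
      ⟨R x, (ContinuousLinearMap.mul_apply (S*T) R x).symm⟩
    rw [hran] at hmem
    obtain ⟨-, hmT⟩ := Submodule.mem_inf.mp hmem
    obtain ⟨y, hy⟩ := hmT
    simp only [ContinuousLinearMap.mul_apply]
    rw [show S (T (R x)) = ((S*T)*R) x from rfl, ← hy]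
    calc T (T' (T y)) = ((T*T'*T)) y := rfl
    _ = T y := by rw [← hT1]
  -- q * e = q (uses hker and hSEP)
  have qe : (R*(S*T)) * (S*S') = R*(S*T) := by
    rw [hSEP]
    ext x
    have hxk : x - S' (S x) ∈ LinearMap.ker (S : X →ₗ[ℂ] X) := by
      rw [LinearMap.mem_ker, map_sub, sub_eq_zero]
      calc S x = (S*S'*S) x := by rw [← hS1]
      _ = S (S' (S x)) := rfl
    have hxk2 : x - S' (S x) ∈ LinearMap.ker ((S*T : X →L[ℂ] X) : X →ₗ[ℂ] X) := by
      rw [hker]; exact Submodule.mem_sup_left hxk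
    have hz : (S*T) (x - S' (S x)) = 0 := LinearMap.mem_ker.mp hxk2
    rw [map_sub, sub_eq_zero] at hz
    simp only [ContinuousLinearMap.mul_apply]
    rw [show (S*T) (S' (S x)) = S (T (S' (S x))) from rfl] at hz
    rw [← hz]
    rfl
  -- q * f = q (ker T ⊆ ker (S*T) trivially, uses hTEP)
  have qf : (R*(S*T)) * (T*T') = R*(S*T) := by
    rw [hTEP]
    ext x
    have hz : T (T' (T x)) = T x := by
      calc T (T' (T x)) = (T*T'*T) x := rfl
      _ = T x := by rw [← hT1]
    simp only [ContinuousLinearMap.mul_apply]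
    rw [hz]
  -- flip the one-sided relations using hermitian idempotent machinery
  have pe : ((S*T)*R) * (S*S') = (S*T)*R := lemC1 _ _ hee hpp nE nP ep
  have pf : ((S*T)*R) * (T*T') = (S*T)*R := lemC1 _ _ hff hpp nF nP fp
  have eq' : (S*S') * (R*(S*T)) = R*(S*T) := lemC2 _ _ hqq hee nQ nE qe
  have fq : (T*T') * (R*(S*T)) = R*(S*T) := lemC2 _ _ hqq hff nQ nF qf
  -- final pointwise argument
  ext x
  -- q x lies in range S ⊓ range T = range (S*T)
  have hqmem : (R*(S*T)) x ∈ LinearMap.range ((S*T : X →L[ℂ] X) : X →ₗ[ℂ] X) := by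
    rw [hran]
    refine Submodule.mem_inf.mpr ⟨⟨S' ((R*(S*T)) x), ?_⟩, ⟨T' ((R*(S*T)) x), ?_⟩⟩
    · calc S (S' ((R*(S*T)) x)) = ((S*S') * (R*(S*T))) x := rfl
      _ = (R*(S*T)) x := by rw [eq']
    · calc T (T' ((R*(S*T)) x)) = ((T*T') * (R*(S*T))) x := rfl
      _ = (R*(S*T)) x := by rw [fq]
  obtain ⟨y, hy⟩ := hqmem
  -- p fixes q x
  have hpq : ((S*T)*R) ((R*(S*T)) x) = (R*(S*T)) x := by
    rw [← hy]
    calc ((S*T)*R) ((S*T) y) = ((S*T)*R*(S*T)) y := rfl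
    _ = (S*T) y := by rw [← h1]
  -- x - q x ∈ ker (S*T) = ker S ⊔ ker T
  have hker0 : (S*T) (x - (R*(S*T)) x) = 0 := by
    rw [map_sub, sub_eq_zero]
    calc (S*T) x = ((S*T)*R*(S*T)) x := by rw [← h1]
    _ = (S*T) ((R*(S*T)) x) := rfl
  have hmem : x - (R*(S*T)) x ∈ LinearMap.ker (S : X →ₗ[ℂ] X) ⊔ LinearMap.ker (T : X →ₗ[ℂ] X) := by
    rw [← hker]; exact LinearMap.mem_ker.mpr hker0
  obtain ⟨u, hu, v, hv, huv⟩ := Submodule.mem_sup.mp hmem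
  -- p kills ker S and ker T
  have hpu : ((S*T)*R) u = 0 := by
    have step : ((S*T)*R) u = (((S*T)*R) * (S'*S)) u := by rw [← hSEP, pe]
    rw [step]
    calc (((S*T)*R) * (S'*S)) u = ((S*T)*R) (S' (S u)) := rfl
    _ = 0 := by have hSu : S u = 0 := LinearMap.mem_ker.mp hu; rw [hSu, map_zero, map_zero]
  have hpv : ((S*T)*R) v = 0 := by
    have step : ((S*T)*R) v = (((S*T)*R) * (T'*T)) v := by rw [← hTEP, pf]
    rw [step]
    calc (((S*T)*R) * (T'*T)) v = ((S*T)*R) (T' (T v)) := rfl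
    _ = 0 := by have hTv : T v = 0 := LinearMap.mem_ker.mp hv; rw [hTv, map_zero, map_zero]
  -- conclude
  have hx : x = (R*(S*T)) x + (u + v) := by rw [huv]; abel
  calc ((S*T)*R) x = ((S*T)*R) ((R*(S*T)) x + (u + v)) := by rw [← hx]
  _ = ((S*T)*R) ((R*(S*T)) x) + (((S*T)*R) u + ((S*T)*R) v) := by rw [map_add, map_add]
  _ = (R*(S*T)) x := by rw [hpu, hpv, hpq, add_zero, add_zero]
end
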